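/- Let D = (V,A) be a digraph. Then, as an identity in the field of rational functions in y, Σ_{S ⊆ A : D^{−S} totally cyclic} y^{|S|} = (−1)^{comp(D)} · (1+y)^{|A|} · B_D(−1, y/(1+y), 1/(1+y)), where D^{−S} is the digraph obtained from D by swapping the source and target of each arc in S, and B_D(−1, y/(1+y), 1/(1+y)) is the evaluation of the B-polynomial of D at q = −1 and at the indicated rational functions of y. -/

import Mathlib

open Finset

/-- The sum over all `q`-colorings of a digraph of
`y ^ (number of ascents) * z ^ (number of descents)`. -/
def colorSum (V A : Type) [Fintype V] [DecidableEq V] [Fintype A]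
    (s t : A → V) (q : ℕ) (y z : ℚ) : ℚ :=
  ∑ f : V → Fin q,
    y ^ (Finset.univ.filter (fun a => f (s a) < f (t a))).card *
    z ^ (Finset.univ.filter (fun a => f (t a) < f (s a))).card

/-- The arc `a` lies on some directed cycle of the digraph. -/
def IsCyclicArc {V A : Type} (s t : A → V) (a : A) : Prop :=
  ∃ n : ℕ, 0 < n ∧ ∃ c : ZMod n → A,
    (∀ i, t (c i) = s (c (i + 1))) ∧ ∃ i, c i = a

/-- The setoid on vertices whose classes are the connected components of the graph
underlying the digraph (arc directions forgotten). -/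
def connSetoid {V A : Type} (s t : A → V) : Setoid V where
  r := Relation.ReflTransGen (fun x y => ∃ a, (s a = x ∧ t a = y) ∨ (s a = y ∧ t a = x))
  iseqv := by
    refine ⟨fun _ => Relation.ReflTransGen.refl, ?_, fun h h' => h.trans h'⟩
    intro x y h
    induction h with
    | refl => exact Relation.ReflTransGen.refl
    | tail _ hbc ih => exact Relation.ReflTransGen.head (hbc.imp (fun a ha => ha.symm)) ih

open scoped Classical

set_option linter.unusedSectionVars false
set_option maxHeartbeats 1000000


section Core
variable {V : Type} [Fintype V] [DecidableEq V]

open scoped Classical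

set_option linter.unusedSectionVars false

/-- Monotone surjections from `W` onto `Fin k`, encoded as functions `V → Fin (|V|+1)`
which are `0` off `W`. -/
noncomputable def monSurj (r : V → V → Prop) (W : Finset V) (k : ℕ) :
    Finset (V → Fin (Fintype.card V + 1)) :=
  Finset.univ.filter (fun f =>
    (∀ x, x ∉ W → (f x : ℕ) = 0) ∧ (∀ x ∈ W, (f x : ℕ) < k) ∧
    (∀ j, j < k → ∃ x ∈ W, (f x : ℕ) = j) ∧
    (∀ x ∈ W, ∀ y ∈ W, r x y → (f x : ℕ) ≤ (f y : ℕ)))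

lemma mem_monSurj {r : V → V → Prop} {W : Finset V} {k : ℕ} {f : V → Fin (Fintype.card V + 1)} :
    f ∈ monSurj r W k ↔
    (∀ x, x ∉ W → (f x : ℕ) = 0) ∧ (∀ x ∈ W, (f x : ℕ) < k) ∧
    (∀ j, j < k → ∃ x ∈ W, (f x : ℕ) = j) ∧
    (∀ x ∈ W, ∀ y ∈ W, r x y → (f x : ℕ) ≤ (f y : ℕ)) := by
  simp [monSurj]

lemma monSurj_zero (r : V → V → Prop) (W : Finset V) :
    (monSurj r W 0).card = if W = ∅ then 1 else 0 := by
  split_ifs with h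
  · subst h
    rw [Finset.card_eq_one]
    refine ⟨fun _ => 0, ?_⟩
    ext f
    simp only [mem_monSurj, Finset.notMem_empty, Finset.mem_singleton]
    constructor
    · rintro ⟨h0, -, -, -⟩
      funext x
      exact Fin.ext (h0 x (by simp))
    · rintro rfl
      refine ⟨fun x _ => rfl, ?_, ?_, ?_⟩ <;> simp
  · rw [Finset.card_eq_zero]
    ext f
    simp only [mem_monSurj, Finset.notMem_empty, iff_false]
    rintro ⟨-, hlt, -, -⟩
    obtain ⟨x, hx⟩ := Finset.nonempty_iff_ne_empty.2 h
    exact absurd (hlt x hx) (by omega)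

lemma monSurj_eq_empty_of_lt (r : V → V → Prop) {W : Finset V} {k : ℕ} (h : W.card < k) :
    monSurj r W k = ∅ := by
  ext f
  simp only [mem_monSurj, Finset.notMem_empty, iff_false]
  rintro ⟨-, -, hsurj, -⟩
  have hsub : Finset.range k ⊆ W.image (fun x => (f x : ℕ)) := by
    intro j hj
    obtain ⟨x, hx, he⟩ := hsurj j (Finset.mem_range.1 hj)
    exact Finset.mem_image.2 ⟨x, hx, he⟩
  have := (Finset.card_le_card hsub).trans (Finset.card_image_le)
  simp only [Finset.card_range] at this
  omega

/-- Nonempty up-sets of `W` with respect to `r`. -/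
noncomputable def upSets (r : V → V → Prop) (W : Finset V) : Finset (Finset V) :=
  W.powerset.filter (fun U => U.Nonempty ∧ ∀ x ∈ U, ∀ y ∈ W, r x y → y ∈ U)

lemma mem_upSets {r : V → V → Prop} {W U : Finset V} :
    U ∈ upSets r W ↔ U ⊆ W ∧ U.Nonempty ∧ ∀ x ∈ U, ∀ y ∈ W, r x y → y ∈ U := by
  simp [upSets, and_assoc]

lemma monSurj_succ_card (r : V → V → Prop) (W : Finset V) (k : ℕ) (hk : k ≤ Fintype.card V) :
    (monSurj r W (k+1)).card = ∑ U ∈ upSets r W, (monSurj r (W \ U) k).card := by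
  have hmaps : ∀ f ∈ monSurj r W (k+1),
      (W.filter (fun x => (f x : ℕ) = k)) ∈ upSets r W := by
    intro f hf
    rw [mem_monSurj] at hf
    obtain ⟨h0, hlt, hsurj, hmono⟩ := hf
    rw [mem_upSets]
    refine ⟨Finset.filter_subset _ _, ?_, ?_⟩
    · obtain ⟨x, hx, hfx⟩ := hsurj k (by omega)
      exact ⟨x, Finset.mem_filter.2 ⟨hx, hfx⟩⟩
    · intro x hx y hy hrxy
      rw [Finset.mem_filter] at hx
      refine Finset.mem_filter.2 ⟨hy, ?_⟩
      have := hmono x hx.1 y hy hrxy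
      have := hlt y hy
      omega
  rw [Finset.card_eq_sum_card_fiberwise hmaps]
  refine Finset.sum_congr rfl (fun U hU => ?_)
  rw [mem_upSets] at hU
  obtain ⟨hUW, hUne, hUup⟩ := hU
  refine Finset.card_bij' (fun f _ => fun x => if x ∈ U then 0 else f x)
    (fun g _ => fun x => if x ∈ U then (⟨k, by omega⟩ : Fin (Fintype.card V + 1)) else g x)
    ?_ ?_ ?_ ?_
  · -- forward maps into monSurj r (W \ U) k
    intro f hf
    rw [Finset.mem_filter, mem_monSurj] at hf
    obtain ⟨⟨h0, hlt, hsurj, hmono⟩, hfib⟩ := hf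
    have hUval : ∀ x, x ∈ U ↔ x ∈ W ∧ (f x : ℕ) = k := by
      intro x
      rw [← hfib, Finset.mem_filter]
    rw [mem_monSurj]
    refine ⟨?_, ?_, ?_, ?_⟩
    · intro x hx
      by_cases hxU : x ∈ U
      · simp [hxU]
      · simp only [hxU, if_false]
        exact h0 x (fun hxW => hx (Finset.mem_sdiff.2 ⟨hxW, hxU⟩))
    · intro x hx
      rw [Finset.mem_sdiff] at hx
      simp only [hx.2, if_false]
      have hne : (f x : ℕ) ≠ k := fun h => hx.2 ((hUval x).2 ⟨hx.1, h⟩)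
      have := hlt x hx.1
      omega
    · intro j hj
      obtain ⟨x, hxW, hfx⟩ := hsurj j (by omega)
      have hxU : x ∉ U := fun hxU => by
        have := ((hUval x).1 hxU).2
        omega
      exact ⟨x, Finset.mem_sdiff.2 ⟨hxW, hxU⟩, by simp [hxU, hfx]⟩
    · intro x hx y hy hrxy
      rw [Finset.mem_sdiff] at hx hy
      simp only [hx.2, hy.2, if_false]
      exact hmono x hx.1 y hy.1 hrxy
  · -- backward maps into the fiber
    intro g hg
    rw [mem_monSurj] at hg
    obtain ⟨h0, hlt, hsurj, hmono⟩ := hg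
    rw [Finset.mem_filter, mem_monSurj]
    have hglt : ∀ x ∈ W, x ∉ U → (g x : ℕ) < k := by
      intro x hxW hxU
      exact hlt x (Finset.mem_sdiff.2 ⟨hxW, hxU⟩)
    refine ⟨⟨?_, ?_, ?_, ?_⟩, ?_⟩
    · intro x hx
      have hxU : x ∉ U := fun h => hx (hUW h)
      simp only [hxU, if_false]
      exact h0 x (fun h => hx (Finset.mem_sdiff.1 h).1)
    · intro x hx
      by_cases hxU : x ∈ U
      · simp [hxU]
      · simp only [hxU, if_false]
        have := hglt x hx hxU
        omega
    · intro j hj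
      rcases Nat.lt_or_ge j k with hjk | hjk
      · obtain ⟨x, hx, hgx⟩ := hsurj j hjk
        rw [Finset.mem_sdiff] at hx
        exact ⟨x, hx.1, by simp [hx.2, hgx]⟩
      · have hjeq : j = k := by omega
        obtain ⟨x, hxU⟩ := hUne
        exact ⟨x, hUW hxU, by simp [hxU, hjeq]⟩
    · intro x hx y hy hrxy
      by_cases hxU : x ∈ U
      · have hyU : y ∈ U := hUup x hxU y hy hrxy
        simp [hxU, hyU]
      · by_cases hyU : y ∈ U
        · simp only [hxU, if_false, hyU, if_true]
          have := hglt x hx hxU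
          omega
        · simp only [hxU, hyU, if_false]
          exact hmono x (Finset.mem_sdiff.2 ⟨hx, hxU⟩) y (Finset.mem_sdiff.2 ⟨hy, hyU⟩) hrxy
    · ext x
      rw [Finset.mem_filter]
      constructor
      · rintro ⟨hxW, hval⟩
        by_contra hxU
        simp only [hxU, if_false] at hval
        have := hglt x hxW hxU
        omega
      · intro hxU
        exact ⟨hUW hxU, by simp [hxU]⟩
  · -- left inverse
    intro f hf
    rw [Finset.mem_filter, mem_monSurj] at hf
    obtain ⟨⟨h0, hlt, hsurj, hmono⟩, hfib⟩ := hf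
    funext x
    by_cases hxU : x ∈ U
    · simp only [hxU, if_true]
      have hxf : x ∈ W.filter (fun z => (f z : ℕ) = k) := by rw [hfib]; exact hxU
      have : (f x : ℕ) = k := (Finset.mem_filter.1 hxf).2
      exact Fin.ext this.symm
    · simp [hxU]
  · -- right inverse
    intro g hg
    rw [mem_monSurj] at hg
    obtain ⟨h0, hlt, hsurj, hmono⟩ := hg
    funext x
    by_cases hxU : x ∈ U
    · simp only [hxU, if_true]
      have : x ∉ W \ U := fun h => (Finset.mem_sdiff.1 h).2 hxU
      exact (Fin.ext (h0 x this)).symm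
    · simp [hxU]

/-- The `r`-class of `x` inside `W`. -/
noncomputable def clW (r : V → V → Prop) (W : Finset V) (x : V) : Finset V :=
  W.filter (fun y => r x y ∧ r y x)

/-- The number of `r`-classes of `W`. -/
noncomputable def numCl (r : V → V → Prop) (W : Finset V) : ℕ :=
  (W.image (clW r W)).card

/-- Minimal elements of `W` w.r.t. the preorder `r`. -/
noncomputable def minSet (r : V → V → Prop) (W : Finset V) : Finset V :=
  W.filter (fun x => ∀ y ∈ W, r y x → r x y)

variable {r : V → V → Prop}

lemma clW_congr (htrans : Transitive r) {W : Finset V} {x y : V}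
    (h1 : r x y) (h2 : r y x) : clW r W x = clW r W y := by
  ext z
  simp only [clW, Finset.mem_filter, and_congr_right_iff]
  intro _
  exact ⟨fun ⟨ha, hb⟩ => ⟨htrans h2 ha, htrans hb h1⟩,
    fun ⟨ha, hb⟩ => ⟨htrans h1 ha, htrans hb h2⟩⟩

lemma mem_clW_self (hrefl : Reflexive r) {W : Finset V} {x : V} (hx : x ∈ W) :
    x ∈ clW r W x :=
  Finset.mem_filter.2 ⟨hx, hrefl x, hrefl x⟩

lemma minSet_nonempty (htrans : Transitive r) (hrefl : Reflexive r) {W : Finset V}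
    (hW : W.Nonempty) : (minSet r W).Nonempty := by
  obtain ⟨x, hx, hmin⟩ := W.exists_min_image (fun x => (W.filter (fun y => r y x)).card) hW
  refine ⟨x, Finset.mem_filter.2 ⟨hx, ?_⟩⟩
  intro y hy hryx
  by_contra hxy
  have hss : W.filter (fun z => r z y) ⊂ W.filter (fun z => r z x) := by
    constructor
    · intro z hz
      rw [Finset.mem_filter] at hz ⊢
      exact ⟨hz.1, htrans hz.2 hryx⟩
    · intro hsub
      exact hxy (Finset.mem_filter.1 (hsub (Finset.mem_filter.2 ⟨hx, hrefl x⟩))).2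
  exact absurd (hmin y hy) (by simp only [not_le]; exact Finset.card_lt_card hss)

/-- Down-closed, symmetric subsets of `W`. -/
noncomputable def symDown (r : V → V → Prop) (W : Finset V) : Finset (Finset V) :=
  W.powerset.filter (fun A =>
    (∀ y ∈ A, ∀ x ∈ W, r x y → x ∈ A) ∧ (∀ x ∈ A, ∀ y ∈ A, r x y → r y x))

lemma mem_symDown {W A : Finset V} :
    A ∈ symDown r W ↔ A ⊆ W ∧ (∀ y ∈ A, ∀ x ∈ W, r x y → x ∈ A) ∧
      (∀ x ∈ A, ∀ y ∈ A, r x y → r y x) := by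
  simp [symDown, and_assoc]

lemma mem_minSet_of_mem_clW (htrans : Transitive r) {W : Finset V} {z y : V}
    (hz : z ∈ minSet r W) (hy : y ∈ clW r W z) : y ∈ minSet r W := by
  rw [minSet, Finset.mem_filter] at hz ⊢
  rw [clW, Finset.mem_filter] at hy
  obtain ⟨hzW, hzmin⟩ := hz
  obtain ⟨hyW, hzy, hyz⟩ := hy
  refine ⟨hyW, fun w hw hrwy => ?_⟩
  exact htrans hyz (hzmin w hw (htrans hrwy hyz))

lemma symDown_sum (htrans : Transitive r) (hrefl : Reflexive r) {W : Finset V}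
    (hW : W.Nonempty) :
    ∑ A ∈ symDown r W, (-1 : ℚ) ^ numCl r A = 0 := by
  have key : ∑ A ∈ symDown r W, (-1 : ℚ) ^ numCl r A
      = ∑ B ∈ (Finset.image (clW r W) (minSet r W)).powerset, (-1 : ℚ) ^ B.card := by
    refine Finset.sum_bij' (fun A _ => A.image (clW r W)) (fun B _ => B.biUnion id)
      ?_ ?_ ?_ ?_ ?_
    · -- image of A is in powerset of M
      intro A hA
      rw [mem_symDown] at hA
      obtain ⟨hAW, hdown, hsym⟩ := hA
      rw [Finset.mem_powerset]
      intro b hb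
      rw [Finset.mem_image] at hb
      obtain ⟨x, hxA, rfl⟩ := hb
      refine Finset.mem_image.2 ⟨x, ?_, rfl⟩
      exact Finset.mem_filter.2 ⟨hAW hxA, fun y hy hryx => hsym y (hdown x hxA y hy hryx) x hxA hryx⟩
    · -- biUnion of B is in symDown
      intro B hB
      rw [Finset.mem_powerset] at hB
      have hBmin : ∀ b ∈ B, ∃ z ∈ minSet r W, clW r W z = b := by
        intro b hb
        exact Finset.mem_image.1 (hB hb)
      have hmem : ∀ x ∈ B.biUnion id, x ∈ minSet r W ∧ ∃ b ∈ B, x ∈ b := by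
        intro x hx
        rw [Finset.mem_biUnion] at hx
        obtain ⟨b, hb, hxb⟩ := hx
        obtain ⟨z, hz, rfl⟩ := hBmin b hb
        exact ⟨mem_minSet_of_mem_clW htrans hz hxb, ⟨_, hb, hxb⟩⟩
      rw [mem_symDown]
      refine ⟨?_, ?_, ?_⟩
      · intro x hx
        obtain ⟨hxmin, -⟩ := hmem x hx
        exact (Finset.mem_filter.1 hxmin).1
      · intro y hy x hx hrxy
        obtain ⟨hymin, b, hb, hyb⟩ := hmem y hy
        obtain ⟨z, hz, rfl⟩ := hBmin b hb
        simp only [clW, id_eq, Finset.mem_filter] at hyb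
        obtain ⟨hyW, hzy, hyz⟩ := hyb
        have hryx : r y x := (Finset.mem_filter.1 hymin).2 x hx hrxy
        refine Finset.mem_biUnion.2 ⟨_, hb, ?_⟩
        simp only [clW, id_eq, Finset.mem_filter]
        exact ⟨hx, htrans hzy hryx, htrans hrxy hyz⟩
      · intro x hx y hy hrxy
        obtain ⟨hymin, -⟩ := hmem y hy
        obtain ⟨hxmin, -⟩ := hmem x hx
        exact (Finset.mem_filter.1 hymin).2 x (Finset.mem_filter.1 hxmin).1 hrxy
    · -- left inverse
      intro A hA
      rw [mem_symDown] at hA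
      obtain ⟨hAW, hdown, hsym⟩ := hA
      ext x
      rw [Finset.mem_biUnion]
      constructor
      · rintro ⟨b, hb, hxb⟩
        rw [Finset.mem_image] at hb
        obtain ⟨z, hzA, rfl⟩ := hb
        simp only [clW, id_eq, Finset.mem_filter] at hxb
        exact hdown z hzA x hxb.1 hxb.2.2
      · intro hx
        exact ⟨clW r W x, Finset.mem_image_of_mem _ hx, mem_clW_self hrefl (hAW hx)⟩
    · -- right inverse
      intro B hB
      rw [Finset.mem_powerset] at hB
      ext b
      constructor
      · intro hb
        rw [Finset.mem_image] at hb
        obtain ⟨x, hx, rfl⟩ := hb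
        rw [Finset.mem_biUnion] at hx
        obtain ⟨b', hb', hxb'⟩ := hx
        obtain ⟨z, hz, rfl⟩ := Finset.mem_image.1 (hB hb')
        simp only [clW, id_eq, Finset.mem_filter] at hxb'
        rwa [clW_congr htrans hxb'.2.2 hxb'.2.1]
      · intro hb
        obtain ⟨z, hz, rfl⟩ := Finset.mem_image.1 (hB hb)
        have hzW : z ∈ W := (Finset.mem_filter.1 hz).1
        refine Finset.mem_image.2 ⟨z, ?_, rfl⟩
        exact Finset.mem_biUnion.2 ⟨_, hb, mem_clW_self hrefl hzW⟩
    · -- values agree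
      intro A hA
      rw [mem_symDown] at hA
      obtain ⟨hAW, hdown, hsym⟩ := hA
      congr 1
      rw [numCl]
      congr 1
      apply Finset.image_congr
      intro x hx
      rw [Finset.mem_coe] at hx
      ext z
      simp only [clW, Finset.mem_filter, and_congr_left_iff]
      intro hz
      exact ⟨fun h => hAW h, fun h => hdown x hx z h hz.2⟩
  rw [key]
  have hM : (Finset.image (clW r W) (minSet r W)).Nonempty :=
    (minSet_nonempty htrans hrefl hW).image _
  have := Finset.sum_powerset_neg_one_pow_card_of_nonempty (x := Finset.image (clW r W) (minSet r W)) hM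
  exact_mod_cast congrArg (fun z : ℤ => (z : ℚ)) this

theorem altSum_eq (htrans : Transitive r) (hrefl : Reflexive r) (W : Finset V) :
    ∑ k ∈ Finset.range (Fintype.card V + 1), (-1 : ℚ) ^ k * ((monSurj r W k).card : ℚ)
      = if (∀ x ∈ W, ∀ y ∈ W, r x y → r y x) then (-1 : ℚ) ^ numCl r W else 0 := by
  induction W using Finset.strongInduction with
  | _ W ih =>
    by_cases hWe : W = ∅
    · subst hWe
      rw [if_pos (by simp)]
      have hnum : numCl r (∅ : Finset V) = 0 := by simp [numCl]
      rw [hnum, pow_zero]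
      rw [Finset.sum_eq_single_of_mem 0 (Finset.mem_range.2 (Nat.succ_pos _))]
      · rw [monSurj_zero]
        simp
      · intro k _ hk0
        rw [monSurj_eq_empty_of_lt r (by simpa using Nat.pos_of_ne_zero hk0)]
        simp
    · have hWne : W.Nonempty := Finset.nonempty_iff_ne_empty.2 hWe
      have hWcard : W.card ≤ Fintype.card V := Finset.card_le_univ W
      rw [Finset.sum_range_succ']
      have h0 : (-1:ℚ)^0 * ((monSurj r W 0).card : ℚ) = 0 := by
        rw [monSurj_zero, if_neg hWe]
        simp
      rw [h0, add_zero]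
      have hstep : ∀ k ∈ Finset.range (Fintype.card V),
          (-1:ℚ)^(k+1) * ((monSurj r W (k+1)).card : ℚ)
          = ∑ U ∈ upSets r W, -((-1:ℚ)^k * ((monSurj r (W \ U) k).card : ℚ)) := by
        intro k hk
        rw [monSurj_succ_card r W k (le_of_lt (Finset.mem_range.1 hk))]
        rw [pow_succ, Nat.cast_sum, Finset.mul_sum]
        refine Finset.sum_congr rfl (fun U hU => ?_)
        ring
      rw [Finset.sum_congr rfl hstep, Finset.sum_comm]
      have hcardU : ∀ U ∈ upSets r W, (W \ U) ⊂ W := by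
        intro U hU
        rw [mem_upSets] at hU
        exact Finset.sdiff_ssubset hU.1 hU.2.1
      have hinner : ∀ U ∈ upSets r W,
          ∑ k ∈ Finset.range (Fintype.card V), -((-1:ℚ)^k * ((monSurj r (W \ U) k).card : ℚ))
          = -(if (∀ x ∈ W \ U, ∀ y ∈ W \ U, r x y → r y x)
              then (-1 : ℚ) ^ numCl r (W \ U) else 0) := by
        intro U hU
        rw [Finset.sum_neg_distrib]
        congr 1
        rw [← ih _ (hcardU U hU), Finset.sum_range_succ]
        have hz : (monSurj r (W \ U) (Fintype.card V)).card = 0 := by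
          rw [monSurj_eq_empty_of_lt r]
          · rfl
          · exact lt_of_lt_of_le (Finset.card_lt_card (hcardU U hU)) hWcard
        rw [hz]
        simp
      rw [Finset.sum_congr rfl hinner, Finset.sum_neg_distrib]
      -- reindex over complements
      have hre : ∑ U ∈ upSets r W,
          (if (∀ x ∈ W \ U, ∀ y ∈ W \ U, r x y → r y x)
            then (-1 : ℚ) ^ numCl r (W \ U) else 0)
          = ∑ A ∈ W.powerset.filter (fun A => A ≠ W ∧ ∀ y ∈ A, ∀ x ∈ W, r x y → x ∈ A),
            (if (∀ x ∈ A, ∀ y ∈ A, r x y → r y x) then (-1 : ℚ) ^ numCl r A else 0) := by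
        refine Finset.sum_bij' (fun U _ => W \ U) (fun A _ => W \ A) ?_ ?_ ?_ ?_ ?_
        · intro U hU
          rw [mem_upSets] at hU
          obtain ⟨hUW, hUne, hUup⟩ := hU
          rw [Finset.mem_filter, Finset.mem_powerset]
          refine ⟨Finset.sdiff_subset, ?_, ?_⟩
          · intro hEq
            obtain ⟨x, hx⟩ := hUne
            have hxWU : x ∈ W \ U := by rw [show (W \ U) = W from hEq]; exact hUW hx
            exact (Finset.mem_sdiff.1 hxWU).2 hx
          · intro y hy x hx hrxy
            rw [Finset.mem_sdiff] at hy ⊢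
            refine ⟨hx, fun hxU => hy.2 (hUup x hxU y hy.1 hrxy)⟩
        · intro A hA
          rw [Finset.mem_filter, Finset.mem_powerset] at hA
          obtain ⟨hAW, hAne, hAdown⟩ := hA
          rw [mem_upSets]
          refine ⟨Finset.sdiff_subset, ?_, ?_⟩
          · obtain ⟨x, hxW, hxA⟩ := Finset.exists_of_ssubset (lt_of_le_of_ne hAW hAne)
            exact ⟨x, Finset.mem_sdiff.2 ⟨hxW, hxA⟩⟩
          · intro x hx y hy hrxy
            rw [Finset.mem_sdiff] at hx ⊢
            refine ⟨hy, fun hyA => hx.2 (hAdown y hyA x hx.1 hrxy)⟩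
        · intro U hU
          rw [mem_upSets] at hU
          exact Finset.sdiff_sdiff_eq_self hU.1
        · intro A hA
          rw [Finset.mem_filter, Finset.mem_powerset] at hA
          exact Finset.sdiff_sdiff_eq_self hA.1
        · intro U _
          rfl
      rw [hre]
      rw [← Finset.sum_filter]
      have hset : (W.powerset.filter (fun A => A ≠ W ∧ ∀ y ∈ A, ∀ x ∈ W, r x y → x ∈ A)).filter
          (fun A => ∀ x ∈ A, ∀ y ∈ A, r x y → r y x) = (symDown r W).erase W := by
        ext A
        rw [Finset.mem_filter, Finset.mem_filter, Finset.mem_powerset, Finset.mem_erase,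
          mem_symDown]
        tauto
      rw [hset]
      by_cases hsymW : ∀ x ∈ W, ∀ y ∈ W, r x y → r y x
      · rw [if_pos hsymW]
        have hWmem : W ∈ symDown r W := by
          rw [mem_symDown]
          exact ⟨Finset.Subset.refl W, fun y _ x hx _ => hx, hsymW⟩
        have := Finset.add_sum_erase _ (fun A => (-1:ℚ)^ numCl r A) hWmem
        rw [symDown_sum htrans hrefl hWne] at this
        linarith [this]
      · rw [if_neg hsymW]
        have hWmem : W ∉ symDown r W := by
          rw [mem_symDown]
          intro h
          exact hsymW h.2.2
        rw [Finset.erase_eq_of_notMem hWmem, symDown_sum htrans hrefl hWne, neg_zero]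

theorem count_monotone (r : V → V → Prop) (q : ℕ) :
    ((Finset.univ.filter (fun f : V → Fin q => ∀ x y, r x y → f x ≤ f y)).card : ℕ)
      = ∑ m ∈ Finset.range (q + 1), q.choose m * (monSurj r Finset.univ m).card := by
  have H : ∀ f ∈ Finset.univ.filter (fun f : V → Fin q => ∀ x y, r x y → f x ≤ f y),
      Finset.univ.image f ∈ (Finset.univ : Finset (Fin q)).powerset := by
    intro f _
    simp
  rw [Finset.card_eq_sum_card_fiberwise H]
  have hfib : ∀ T ∈ (Finset.univ : Finset (Fin q)).powerset,
      ((Finset.univ.filter (fun f : V → Fin q => ∀ x y, r x y → f x ≤ f y)).filter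
        (fun f => Finset.univ.image f = T)).card = (monSurj r Finset.univ T.card).card := by
    intro T _
    set k := T.card with hk
    have e := T.orderIsoOfFin hk.symm
    refine Finset.card_bij'
      (fun f hf => fun x => ⟨(e.symm ⟨f x, ?_⟩).val, ?_⟩)
      (fun g hg => fun x => (e ⟨(g x).val, ?_⟩).val) ?_ ?_ ?_ ?_
    · -- f x ∈ T
      rw [Finset.mem_filter] at hf
      rw [← hf.2]
      exact Finset.mem_image_of_mem f (Finset.mem_univ x)
    · -- val < card V + 1
      refine lt_of_lt_of_le (Fin.is_lt _) ?_
      rw [Finset.mem_filter] at hf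
      calc k = (Finset.univ.image f).card := by rw [hf.2]
      _ ≤ (Finset.univ : Finset V).card := Finset.card_image_le
      _ ≤ Fintype.card V + 1 := by rw [Finset.card_univ]; omega
    · -- (g x).val < k
      rw [mem_monSurj] at hg
      exact hg.2.1 x (Finset.mem_univ x)
    · -- forward membership
      intro f hf
      have hfmem := hf
      rw [Finset.mem_filter, Finset.mem_filter] at hfmem
      obtain ⟨⟨-, hmono⟩, himg⟩ := hfmem
      rw [mem_monSurj]
      refine ⟨?_, ?_, ?_, ?_⟩
      · intro x hx
        exact absurd (Finset.mem_univ x) hx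
      · intro x _
        exact (e.symm _).is_lt
      · intro j hj
        have hy : (e ⟨j, hj⟩ : Fin q) ∈ Finset.univ.image f := by
          rw [himg]; exact (e ⟨j, hj⟩).2
        rw [Finset.mem_image] at hy
        obtain ⟨x, -, hx⟩ := hy
        refine ⟨x, Finset.mem_univ x, ?_⟩
        have : (⟨f x, by rw [← himg]; exact Finset.mem_image_of_mem f (Finset.mem_univ x)⟩
            : {a // a ∈ T}) = e ⟨j, hj⟩ := Subtype.ext hx
        simp only [this, OrderIso.symm_apply_apply]
      · intro x _ y _ hrxy
        have hfxT : f x ∈ T := by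
          rw [← himg]; exact Finset.mem_image_of_mem f (Finset.mem_univ x)
        have hfyT : f y ∈ T := by
          rw [← himg]; exact Finset.mem_image_of_mem f (Finset.mem_univ y)
        have h1 : (⟨f x, hfxT⟩ : {a // a ∈ T}) ≤ ⟨f y, hfyT⟩ :=
          Subtype.mk_le_mk.2 (hmono x y hrxy)
        have h2 : e.symm ⟨f x, hfxT⟩ ≤ e.symm ⟨f y, hfyT⟩ := e.symm.le_iff_le.2 h1
        exact h2
    · -- backward membership
      intro g hg
      have hgmem := hg
      rw [mem_monSurj] at hgmem
      obtain ⟨-, hlt, hsurj, hmono⟩ := hgmem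
      rw [Finset.mem_filter, Finset.mem_filter]
      refine ⟨⟨Finset.mem_univ _, ?_⟩, ?_⟩
      · intro x y hrxy
        have h1 : ((g x).val : ℕ) ≤ (g y).val := hmono x (Finset.mem_univ x) y (Finset.mem_univ y) hrxy
        have h2 : (⟨(g x).val, hlt x (Finset.mem_univ x)⟩ : Fin k)
            ≤ ⟨(g y).val, hlt y (Finset.mem_univ y)⟩ := h1
        have := e.le_iff_le.2 h2
        exact this
      · ext z
        simp only [Finset.mem_image, Finset.mem_univ, true_and]
        constructor
        · rintro ⟨x, rfl⟩
          exact (e _).2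
        · intro hz
          have hj := (e.symm ⟨z, hz⟩).is_lt
          obtain ⟨x, -, hx⟩ := hsurj (e.symm ⟨z, hz⟩).val hj
          refine ⟨x, ?_⟩
          have : (⟨(g x).val, hlt x (Finset.mem_univ x)⟩ : Fin k) = e.symm ⟨z, hz⟩ :=
            Fin.ext hx
          rw [this, OrderIso.apply_symm_apply]
    · -- left inverse
      intro f hf
      funext x
      dsimp only
      rw [Fin.eta, OrderIso.apply_symm_apply]
    · -- right inverse
      intro g hg
      funext x
      apply Fin.ext
      dsimp only
      rw [Subtype.coe_eta, OrderIso.symm_apply_apply]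
  rw [Finset.sum_congr rfl hfib]
  rw [Finset.sum_powerset_apply_card (fun m => (monSurj r Finset.univ m).card)]
  simp only [Finset.card_univ, Fintype.card_fin, smul_eq_mul]

end Core

section Digraph
variable {V A : Type}

/-- `arcChain s' t' u L v` : the list of arcs `L` forms a directed path from `u` to `v`. -/
def arcChain (s' t' : A → V) : V → List A → V → Prop
  | u, [], v => u = v
  | u, b :: L, v => s' b = u ∧ arcChain s' t' (t' b) L v

lemma exists_arcChain {s' t' : A → V} {x y : V}
    (h : Relation.ReflTransGen (fun p q => ∃ b, t' b = p ∧ s' b = q) x y) :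
    ∃ L, arcChain s' t' y L x := by
  induction h with
  | refl => exact ⟨[], rfl⟩
  | tail h1 h2 ih =>
    obtain ⟨L, hL⟩ := ih
    obtain ⟨e, hte, hse⟩ := h2
    exact ⟨e :: L, hse, hte ▸ hL⟩

lemma arcChain_getD {s' t' : A → V} (a0 : A) :
    ∀ (L : List A) (u v : V), arcChain s' t' u L v →
      ∀ j, j + 1 < L.length → t' (L.getD j a0) = s' (L.getD (j+1) a0) := by
  intro L
  induction L with
  | nil => intro u v _ j hj; simp at hj
  | cons b L ih =>
    intro u v hch j hj
    obtain ⟨hs, hch'⟩ := hch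
    match j with
    | 0 =>
      match L, hch' with
      | c :: L', ⟨hc, _⟩ => simpa using hc.symm
    | j + 1 =>
      have := ih (t' b) v hch' j (by simpa using hj)
      simpa using this

lemma arcChain_last {s' t' : A → V} (a0 : A) :
    ∀ (L : List A) (u v : V), arcChain s' t' u L v → L ≠ [] →
      t' (L.getD (L.length - 1) a0) = v := by
  intro L
  induction L with
  | nil => intro u v _ h; exact absurd rfl h
  | cons b L ih =>
    intro u v hch _
    obtain ⟨hs, hch'⟩ := hch
    match L, hch' with
    | [], h => simpa [arcChain] using h
    | c :: L', h =>
      have := ih (t' b) v h (by simp)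
      simpa using this

lemma isCyclicArc_of_rts {s' t' : A → V} {a : A}
    (h : Relation.ReflTransGen (fun p q => ∃ b, t' b = p ∧ s' b = q) (s' a) (t' a)) :
    IsCyclicArc s' t' a := by
  obtain ⟨L, hL⟩ := exists_arcChain h
  -- hL : arcChain s' t' (t' a) L (s' a)
  have hfull : arcChain s' t' (s' a) (a :: L) (s' a) := ⟨rfl, hL⟩
  rcases L with _ | ⟨b, L'⟩
  · -- single-arc loop : t' a = s' a
    refine ⟨1, one_pos, fun _ => a, ?_, ⟨0, rfl⟩⟩
    intro i
    exact hL
  · set L := b :: L' with hLdef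
    set m := (a :: L).length with hm
    have hm2 : 2 ≤ m := by simp [hm, hLdef]
    have : NeZero m := ⟨by omega⟩
    have hfact : Fact (1 < m) := ⟨by omega⟩
    refine ⟨m, by omega, fun i => (a :: L).getD (ZMod.val i) a, ?_, ⟨0, ?_⟩⟩
    · intro i
      dsimp only
      have hival : (i : ZMod m).val < m := ZMod.val_lt i
      have hval1 : (i + 1 : ZMod m).val = (i.val + 1) % m := by
        rw [ZMod.val_add, ZMod.val_one]
      rcases Nat.lt_or_ge (i.val + 1) m with hlt | hge
      · rw [hval1, Nat.mod_eq_of_lt hlt]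
        exact arcChain_getD a _ _ _ hfull i.val (by omega)
      · have hie : i.val = m - 1 := by omega
        have h1 : (i + 1 : ZMod m).val = 0 := by
          rw [hval1, hie]
          have : m - 1 + 1 = m := by omega
          rw [this, Nat.mod_self]
        rw [h1, hie]
        have := arcChain_last a (a :: L) _ _ hfull (by simp)
        rw [← hm] at this
        simpa using this
    · dsimp only
      rw [ZMod.val_zero]
      rfl

lemma rts_symm {s' t' : A → V}
    (h : ∀ a, Relation.ReflTransGen (fun p q => ∃ b, t' b = p ∧ s' b = q) (s' a) (t' a)) :
    ∀ {x y}, Relation.ReflTransGen (fun p q => ∃ b, t' b = p ∧ s' b = q) x y →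
      Relation.ReflTransGen (fun p q => ∃ b, t' b = p ∧ s' b = q) y x := by
  intro x y hxy
  induction hxy with
  | refl => exact Relation.ReflTransGen.refl
  | tail h1 h2 ih =>
    obtain ⟨e, hte, hse⟩ := h2
    subst hte hse
    exact Relation.ReflTransGen.trans (h e) ih

lemma rts_of_isCyclicArc {s' t' : A → V} {a : A} (h : IsCyclicArc s' t' a) :
    Relation.ReflTransGen (fun p q => ∃ b, t' b = p ∧ s' b = q) (s' a) (t' a) := by
  obtain ⟨n, hn, c, hc, i0, hci0⟩ := h
  have key : ∀ m : ℕ, Relation.ReflTransGen (fun p q => ∃ b, t' b = p ∧ s' b = q)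
      (s' (c i0)) (s' (c (i0 - (m : ZMod n)))) := by
    intro m
    induction m with
    | zero => simpa using Relation.ReflTransGen.refl
    | succ m ih =>
      refine Relation.ReflTransGen.tail ih ⟨c (i0 - ((m : ℕ) + 1 : ℕ)), ?_, rfl⟩
      have := hc (i0 - ((m : ℕ) + 1 : ℕ))
      rw [this]
      congr 1
      push_cast
      ring
  have hlast := key (n - 1)
  have hcast : ((n - 1 : ℕ) : ZMod n) = -1 := by
    rw [Nat.cast_sub hn, ZMod.natCast_self, Nat.cast_one, zero_sub]
  rw [hcast, sub_neg_eq_add] at hlast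
  have : s' (c (i0 + 1)) = t' (c i0) := (hc i0).symm
  rw [this, hci0] at hlast
  exact hlast

end Digraph

section QuotientCount
variable {V : Type} [Fintype V] [DecidableEq V]
open scoped Classical

lemma natCard_quotient_eq_image_card (sd : Setoid V) :
    Nat.card (Quotient sd) =
      (Finset.univ.image (fun x => Finset.univ.filter (fun y => sd.r x y))).card := by
  letI : DecidableEq (Quotient sd) := Classical.decEq _
  have hG : ∀ (x x' : V), sd.r x x' →
      (Finset.univ.filter (fun y => sd.r x y)) = (Finset.univ.filter (fun y => sd.r x' y)) := by
    intro x x' hxx'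
    ext z
    simp only [Finset.mem_filter, Finset.mem_univ, true_and]
    exact ⟨fun h => sd.iseqv.trans (sd.iseqv.symm hxx') h, fun h => sd.iseqv.trans hxx' h⟩
  set G : Quotient sd → Finset V :=
    Quotient.lift (fun x => Finset.univ.filter (fun y => sd.r x y)) (fun x x' h => hG x x' h)
    with hGdef
  have himg : Finset.univ.image (fun x => Finset.univ.filter (fun y => sd.r x y))
      = (Finset.univ.image (Quotient.mk sd)).image G := by
    rw [Finset.image_image]
    rfl
  have hsurj : (Finset.univ.image (Quotient.mk sd)) = Finset.univ := by
    apply Finset.eq_univ_of_forall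
    intro q
    induction q using Quotient.inductionOn with
    | h x => exact Finset.mem_image_of_mem _ (Finset.mem_univ x)
  have hGinj : Function.Injective G := by
    intro q q' hqq'
    induction q using Quotient.inductionOn with
    | h x =>
      induction q' using Quotient.inductionOn with
      | h x' =>
        have hx' : x' ∈ Finset.univ.filter (fun y => sd.r x' y) := by
          simp only [Finset.mem_filter, Finset.mem_univ, true_and]
          exact sd.iseqv.refl x'
        have hx'2 : x' ∈ Finset.univ.filter (fun y => sd.r x y) := by
          have hGe : G (Quotient.mk sd x) = G (Quotient.mk sd x') := hqq'
          simp only [hGdef, Quotient.lift_mk] at hGe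
          rw [hGe]
          exact hx'
        simp only [Finset.mem_filter, Finset.mem_univ, true_and] at hx'2
        exact Quotient.sound hx'2
  rw [himg, Finset.card_image_of_injective _ hGinj, hsurj, Finset.card_univ,
    Nat.card_eq_fintype_card]

end QuotientCount


lemma descPochhammer_eval_neg_one (k : ℕ) :
    (descPochhammer ℚ k).eval (-1) = (-1) ^ k * k.factorial := by
  induction k with
  | zero => simp
  | succ k ih =>
    rw [descPochhammer_succ_right, Polynomial.eval_mul, ih, Polynomial.eval_sub,
      Polynomial.eval_X, Polynomial.eval_natCast, pow_succ, Nat.factorial_succ]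
    push_cast
    ring

lemma sum_pow_card {A : Type} [DecidableEq A] (u : Finset A) (y : ℚ) :
    ∑ T ∈ u.powerset, y ^ T.card = (1 + y) ^ u.card := by
  have h := Finset.prod_add (fun _ : A => y) (fun _ : A => 1) u
  simp only [Finset.prod_const, one_pow, mul_one] at h
  rw [add_comm 1 y, ← h]

section Main
variable {V A : Type} [Fintype V] [DecidableEq V] [Fintype A] [DecidableEq A]
open scoped Classical

/-- The "monotonicity requirement" relation of the reorientation `D^{-S}`:
`reorientRel s t S x y` iff there is a directed path from `y` to `x` in `D^{-S}`. -/
def reorientRel (s t : A → V) (S : Finset A) : V → V → Prop :=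
  Relation.ReflTransGen (fun p q => ∃ b,
    (if b ∈ S then s b else t b) = p ∧ (if b ∈ S then t b else s b) = q)

lemma reorientRel_trans (s t : A → V) (S : Finset A) : Transitive (reorientRel s t S) :=
  fun _ _ _ h h' => Relation.ReflTransGen.trans h h'

lemma reorientRel_refl (s t : A → V) (S : Finset A) : Reflexive (reorientRel s t S) :=
  fun _ => Relation.ReflTransGen.refl

lemma noAscent_iff_monotone (s t : A → V) (S : Finset A) {q : ℕ} (f : V → Fin q) :
    (∀ a : A, ¬ f (if a ∈ S then t a else s a) < f (if a ∈ S then s a else t a)) ↔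
    (∀ x y, reorientRel s t S x y → f x ≤ f y) := by
  constructor
  · intro h x y hxy
    induction hxy with
    | refl => exact le_refl _
    | tail h1 h2 ih =>
      obtain ⟨b, hb1, hb2⟩ := h2
      have hb := not_lt.1 (h b)
      rw [hb1, hb2] at hb
      exact le_trans ih hb
  · intro h a
    rw [not_lt]
    exact h _ _ (Relation.ReflTransGen.single ⟨a, rfl, rfl⟩)

/-- Number of colorings with no ascent in the reorientation `D^{-S}`. -/
noncomputable def Ncount (s t : A → V) (S : Finset A) (q : ℕ) : ℕ :=
  (Finset.univ.filter (fun f : V → Fin q =>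
    ∀ a : A, ¬ f (if a ∈ S then t a else s a) < f (if a ∈ S then s a else t a))).card

lemma Ncount_eq (s t : A → V) (S : Finset A) (q : ℕ) :
    Ncount s t S q
      = ∑ m ∈ Finset.range (q + 1),
          q.choose m * (monSurj (reorientRel s t S) Finset.univ m).card := by
  rw [Ncount, ← count_monotone (reorientRel s t S) q]
  congr 1
  apply Finset.filter_congr
  intro f _
  simpa using noAscent_iff_monotone s t S f

lemma reorient_sum (s t : A → V) (y : ℚ) {q : ℕ} (f : V → Fin q) :
    ∑ S : Finset A, (if (∀ a : A, ¬ f (if a ∈ S then t a else s a)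
        < f (if a ∈ S then s a else t a)) then y ^ S.card else 0)
    = y ^ (univ.filter (fun a => f (s a) < f (t a))).card
      * (1 + y) ^ (univ.filter (fun a => f (s a) = f (t a))).card := by
  set asc := univ.filter (fun a => f (s a) < f (t a)) with hasc
  set eqf := univ.filter (fun a => f (s a) = f (t a)) with heqf
  have hdisj : Disjoint asc eqf := by
    rw [Finset.disjoint_left]
    intro a ha ha'
    rw [hasc, Finset.mem_filter] at ha
    rw [heqf, Finset.mem_filter] at ha'
    exact absurd (ha'.2 ▸ ha.2) (lt_irrefl _)
  have hcond : ∀ S : Finset A,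
      (∀ a : A, ¬ f (if a ∈ S then t a else s a) < f (if a ∈ S then s a else t a))
      ↔ (asc ⊆ S ∧ S \ asc ⊆ eqf) := by
    intro S
    constructor
    · intro h
      constructor
      · intro a ha
        rw [hasc, Finset.mem_filter] at ha
        by_contra haS
        have := h a
        simp only [haS, if_false] at this
        exact this ha.2
      · intro a ha
        rw [Finset.mem_sdiff] at ha
        obtain ⟨haS, hna⟩ := ha
        have h1 := h a
        simp only [haS, if_true] at h1
        have h2 : ¬ f (s a) < f (t a) := by
          intro hlt
          exact hna (by rw [hasc, Finset.mem_filter]; exact ⟨Finset.mem_univ a, hlt⟩)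
        rw [heqf, Finset.mem_filter]
        exact ⟨Finset.mem_univ a, le_antisymm (not_lt.1 h1) (not_lt.1 h2)⟩
    · rintro ⟨h1, h2⟩ a
      by_cases haS : a ∈ S
      · simp only [haS, if_true]
        by_cases hna : a ∈ asc
        · rw [hasc, Finset.mem_filter] at hna
          exact asymm hna.2
        · have : a ∈ eqf := h2 (Finset.mem_sdiff.2 ⟨haS, hna⟩)
          rw [heqf, Finset.mem_filter] at this
          rw [this.2]
          exact lt_irrefl _
      · simp only [haS, if_false]
        intro hlt
        exact haS (h1 (by rw [hasc, Finset.mem_filter]; exact ⟨Finset.mem_univ a, hlt⟩))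
  have h1 : ∑ S : Finset A, (if (∀ a : A, ¬ f (if a ∈ S then t a else s a)
        < f (if a ∈ S then s a else t a)) then y ^ S.card else 0)
      = ∑ S ∈ univ.filter (fun S : Finset A => asc ⊆ S ∧ S \ asc ⊆ eqf), y ^ S.card := by
    rw [Finset.sum_filter]
    refine Finset.sum_congr rfl (fun S _ => ?_)
    by_cases h : asc ⊆ S ∧ S \ asc ⊆ eqf
    · rw [if_pos h, if_pos ((hcond S).2 h)]
    · rw [if_neg h, if_neg (fun hc => h ((hcond S).1 hc))]
  rw [h1]
  have h2 : ∑ S ∈ univ.filter (fun S : Finset A => asc ⊆ S ∧ S \ asc ⊆ eqf), y ^ S.card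
      = ∑ T ∈ eqf.powerset, y ^ (asc.card + T.card) := by
    refine Finset.sum_bij' (fun S _ => S \ asc) (fun T _ => asc ∪ T) ?_ ?_ ?_ ?_ ?_
    · intro S hS
      rw [Finset.mem_filter] at hS
      exact Finset.mem_powerset.2 hS.2.2
    · intro T hT
      rw [Finset.mem_powerset] at hT
      rw [Finset.mem_filter]
      refine ⟨Finset.mem_univ _, Finset.subset_union_left, ?_⟩
      intro a ha
      rw [Finset.mem_sdiff, Finset.mem_union] at ha
      exact hT (ha.1.resolve_left ha.2)
    · intro S hS
      rw [Finset.mem_filter] at hS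
      exact Finset.union_sdiff_of_subset hS.2.1
    · intro T hT
      rw [Finset.mem_powerset] at hT
      exact Finset.union_sdiff_cancel_left (hdisj.mono_right hT)
    · intro S hS
      rw [Finset.mem_filter] at hS
      congr 1
      rw [Finset.card_sdiff_of_subset hS.2.1]
      have := Finset.card_le_card hS.2.1
      omega
  rw [h2]
  have h3 : ∑ T ∈ eqf.powerset, y ^ (asc.card + T.card)
      = y ^ asc.card * ∑ T ∈ eqf.powerset, y ^ T.card := by
    rw [Finset.mul_sum]
    exact Finset.sum_congr rfl (fun T _ => pow_add y _ _)
  rw [h3, sum_pow_card]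

lemma card_split (s t : A → V) {q : ℕ} (f : V → Fin q) :
    (univ.filter (fun a => f (s a) < f (t a))).card
      + (univ.filter (fun a => f (t a) < f (s a))).card
      + (univ.filter (fun a => f (s a) = f (t a))).card = Fintype.card A := by
  have h1 := Finset.card_filter_add_card_filter_not
    (s := (univ : Finset A)) (p := fun a => f (s a) < f (t a))
  have h2 : univ.filter (fun a => ¬ f (s a) < f (t a))
      = univ.filter (fun a => f (t a) < f (s a)) ∪ univ.filter (fun a => f (s a) = f (t a)) := by
    ext a
    simp only [Finset.mem_filter, Finset.mem_union, Finset.mem_univ, true_and, not_lt]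
    constructor
    · intro h
      rcases lt_or_eq_of_le h with h' | h'
      · exact Or.inl h'
      · exact Or.inr h'.symm
    · rintro (h | h)
      · exact le_of_lt h
      · exact le_of_eq h.symm
  have hd : Disjoint (univ.filter (fun a => f (t a) < f (s a)))
      (univ.filter (fun a => f (s a) = f (t a))) := by
    rw [Finset.disjoint_left]
    intro a ha ha'
    rw [Finset.mem_filter] at ha ha'
    exact absurd (ha'.2 ▸ ha.2) (lt_irrefl _)
  rw [h2, Finset.card_union_of_disjoint hd, Finset.card_univ] at h1
  omega

lemma colorSum_expand (s t : A → V) (y : ℚ) (hy1 : 1 + y ≠ 0) (q : ℕ) :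
    (1 + y) ^ (Fintype.card A) * colorSum V A s t q (y/(1+y)) (1/(1+y))
      = ∑ S : Finset A, y ^ S.card * (Ncount s t S q : ℚ) := by
  rw [colorSum, Finset.mul_sum]
  have hper : ∀ f : V → Fin q,
      (1+y)^(Fintype.card A) *
        ((y/(1+y)) ^ (univ.filter (fun a => f (s a) < f (t a))).card
          * (1/(1+y)) ^ (univ.filter (fun a => f (t a) < f (s a))).card)
      = y ^ (univ.filter (fun a => f (s a) < f (t a))).card
        * (1 + y) ^ (univ.filter (fun a => f (s a) = f (t a))).card := by
    intro f
    have hs := card_split s t f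
    set af := (univ.filter (fun a => f (s a) < f (t a))).card
    set df := (univ.filter (fun a => f (t a) < f (s a))).card
    set ef := (univ.filter (fun a => f (s a) = f (t a))).card
    rw [← hs, div_pow, div_pow, one_pow, pow_add, pow_add]
    field_simp
  rw [Finset.sum_congr rfl (fun f _ => hper f)]
  have hswap : ∑ f : V → Fin q,
      (y ^ (univ.filter (fun a => f (s a) < f (t a))).card
        * (1 + y) ^ (univ.filter (fun a => f (s a) = f (t a))).card)
      = ∑ S : Finset A, ∑ f : V → Fin q,
          (if (∀ a : A, ¬ f (if a ∈ S then t a else s a)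
              < f (if a ∈ S then s a else t a)) then y ^ S.card else 0) := by
    rw [Finset.sum_comm]
    exact Finset.sum_congr rfl (fun f _ => (reorient_sum s t y f).symm)
  rw [hswap]
  refine Finset.sum_congr rfl (fun S _ => ?_)
  rw [← Finset.sum_filter, Finset.sum_const, Ncount]
  rw [nsmul_eq_mul, mul_comm]

end Main

theorem B_at_minus_one_counts_totally_cyclic_reorientations
    (V A : Type) [Fintype V] [DecidableEq V] [Fintype A] [DecidableEq A]
    (s t : A → V)
    (B : MvPolynomial (Fin 3) ℚ)
    (hB : ∀ q : ℕ, 0 < q → ∀ y z : ℚ,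
      MvPolynomial.eval ![(q : ℚ), y, z] B = colorSum V A s t q y z) :
    ∀ y : ℚ, y ≠ -1 →
      ∑ S ∈ (Finset.univ : Finset (Finset A)).filter
          (fun S => ∀ a : A, IsCyclicArc
            (fun b => if b ∈ S then t b else s b)
            (fun b => if b ∈ S then s b else t b) a),
        y ^ S.card
      = (-1 : ℚ) ^ (Nat.card (Quotient (connSetoid s t))) *
        ((1 + y) ^ (Fintype.card A) *
          MvPolynomial.eval ![(-1 : ℚ), y / (1 + y), 1 / (1 + y)] B) := by
  intro y hy
  have hy1 : (1 : ℚ) + y ≠ 0 := fun h => hy (by linarith)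
  set u := y / (1 + y) with hu
  set v := 1 / (1 + y) with hv
  set N := Nat.card (Quotient (connSetoid s t)) with hN
  set cyc : Finset A → Prop := fun S => ∀ a : A, IsCyclicArc
      (fun b => if b ∈ S then t b else s b)
      (fun b => if b ∈ S then s b else t b) a with hcyc
  set P : Finset A → Polynomial ℚ := fun S =>
    ∑ m ∈ Finset.range (Fintype.card V + 1),
      Polynomial.C (((monSurj (reorientRel s t S) Finset.univ m).card : ℚ) / m.factorial) *
        descPochhammer ℚ m with hP
  set Q : Polynomial ℚ := MvPolynomial.eval₂ Polynomial.C
      ![Polynomial.X, Polynomial.C u, Polynomial.C v] B with hQ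
  -- evaluation of Q
  have hQeval : ∀ x : ℚ, Q.eval x = MvPolynomial.eval ![x, u, v] B := by
    intro x
    rw [hQ]
    rw [show Polynomial.eval x (MvPolynomial.eval₂ Polynomial.C
        ![Polynomial.X, Polynomial.C u, Polynomial.C v] B)
      = (Polynomial.evalRingHom x) (MvPolynomial.eval₂ Polynomial.C
        ![Polynomial.X, Polynomial.C u, Polynomial.C v] B) from rfl]
    rw [MvPolynomial.eval₂_comp_left]
    have h1 : (Polynomial.evalRingHom x).comp Polynomial.C = RingHom.id ℚ := by
      apply RingHom.ext
      intro r
      simp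
    have h2 : (⇑(Polynomial.evalRingHom x)) ∘ ![Polynomial.X, Polynomial.C u, Polynomial.C v]
        = ![x, u, v] := by
      funext i
      fin_cases i <;> simp
    rw [h1, h2, MvPolynomial.eval₂_id]
  -- (P S).eval at naturals
  have hPnat : ∀ (S : Finset A) (q : ℕ), (P S).eval (q : ℚ) = (Ncount s t S q : ℚ) := by
    intro S q
    rw [hP]
    rw [Polynomial.eval_finset_sum]
    have hterm : ∀ m ∈ Finset.range (Fintype.card V + 1),
        (Polynomial.C (((monSurj (reorientRel s t S) Finset.univ m).card : ℚ) / m.factorial) *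
          descPochhammer ℚ m).eval (q : ℚ)
        = (q.choose m : ℚ) * ((monSurj (reorientRel s t S) Finset.univ m).card : ℚ) := by
      intro m _
      rw [Polynomial.eval_mul, Polynomial.eval_C, descPochhammer_eval_eq_descFactorial,
        Nat.descFactorial_eq_factorial_mul_choose]
      have hfac : ((m.factorial : ℚ)) ≠ 0 := by
        exact_mod_cast Nat.factorial_pos m |>.ne'
      push_cast
      field_simp
    rw [Finset.sum_congr rfl hterm]
    rw [Ncount_eq]
    push_cast
    -- pad the ranges
    rcases le_or_gt (q + 1) (Fintype.card V + 1) with hle | hlt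
    · symm
      apply Finset.sum_subset (Finset.range_subset_range.2 hle)
      intro m _ hm
      rw [Finset.mem_range, not_lt] at hm
      rw [Nat.choose_eq_zero_of_lt (by omega)]
      simp
    · apply Finset.sum_subset (Finset.range_subset_range.2 (by omega))
      intro m _ hm
      rw [Finset.mem_range, not_lt] at hm
      rw [monSurj_eq_empty_of_lt (reorientRel s t S)
        (by rw [Finset.card_univ]; omega)]
      simp
  -- agreement on positive integers
  have hagree : ∀ q : ℕ, 0 < q →
      (Polynomial.C ((1+y)^(Fintype.card A)) * Q).eval (q : ℚ)
        = (∑ S : Finset A, Polynomial.C (y ^ S.card) * P S).eval (q : ℚ) := by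
    intro q hq
    rw [Polynomial.eval_mul, Polynomial.eval_C, hQeval, hB q hq u v,
      colorSum_expand s t y hy1 q, Polynomial.eval_finset_sum]
    refine Finset.sum_congr rfl (fun S _ => ?_)
    rw [Polynomial.eval_mul, Polynomial.eval_C, hPnat]
  have hLR : Polynomial.C ((1+y)^(Fintype.card A)) * Q
      = ∑ S : Finset A, Polynomial.C (y ^ S.card) * P S := by
    apply Polynomial.eq_of_infinite_eval_eq
    apply Set.infinite_of_injective_forall_mem (f := fun n : ℕ => ((n : ℚ) + 1))
    · intro a b hab
      simp only [add_left_inj, Nat.cast_inj] at hab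
      exact hab
    · intro n
      have := hagree (n + 1) (Nat.succ_pos n)
      push_cast at this
      exact this
  -- symmetry of reorientRel ↔ total cyclicity
  have hsymiff : ∀ S : Finset A,
      (∀ x z, reorientRel s t S x z → reorientRel s t S z x) ↔ cyc S := by
    intro S
    constructor
    · intro hsym a
      apply isCyclicArc_of_rts
      exact hsym _ _ (Relation.ReflTransGen.single ⟨a, rfl, rfl⟩)
    · intro hc x z hxz
      exact rts_symm (fun a => rts_of_isCyclicArc (hc a)) hxz
  -- under symmetry, classes are the connected components
  have hclasses : ∀ S : Finset A,
      (∀ x z, reorientRel s t S x z → reorientRel s t S z x) →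
      numCl (reorientRel s t S) (Finset.univ : Finset V) = N := by
    intro S hsym
    have hrel : ∀ x z, (reorientRel s t S x z ∧ reorientRel s t S z x)
        ↔ (connSetoid s t).r x z := by
      intro x z
      constructor
      · rintro ⟨h1, -⟩
        refine Relation.ReflTransGen.mono ?_ _ _ h1
        intro p q' hpq
        obtain ⟨b, hb1, hb2⟩ := hpq
        by_cases hbS : b ∈ S
        · simp only [hbS, if_true] at hb1 hb2
          exact ⟨b, Or.inl ⟨hb1, hb2⟩⟩
        · simp only [hbS, if_false] at hb1 hb2
          exact ⟨b, Or.inr ⟨hb2, hb1⟩⟩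
      · intro h
        have hstep : ∀ p q', (∃ a, (s a = p ∧ t a = q') ∨ (s a = q' ∧ t a = p)) →
            reorientRel s t S p q' := by
          rintro p q' ⟨a, hcase⟩
          rcases hcase with ⟨ha1, ha2⟩ | ⟨ha1, ha2⟩
          · by_cases haS : a ∈ S
            · exact Relation.ReflTransGen.single ⟨a, by simp [haS, ha1], by simp [haS, ha2]⟩
            · exact hsym _ _
                (Relation.ReflTransGen.single ⟨a, by simp [haS, ha2], by simp [haS, ha1]⟩)
          · by_cases haS : a ∈ S
            · exact hsym _ _
                (Relation.ReflTransGen.single ⟨a, by simp [haS, ha1], by simp [haS, ha2]⟩)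
            · exact Relation.ReflTransGen.single ⟨a, by simp [haS, ha2], by simp [haS, ha1]⟩
        have hmain : reorientRel s t S x z := by
          induction h with
          | refl => exact Relation.ReflTransGen.refl
          | tail h1 h2 ih => exact Relation.ReflTransGen.trans ih (hstep _ _ h2)
        exact ⟨hmain, hsym _ _ hmain⟩
    rw [hN, natCard_quotient_eq_image_card (connSetoid s t), numCl]
    congr 1
    apply Finset.image_congr
    intro x _
    ext z
    simp only [clW, Finset.mem_filter, Finset.mem_univ, true_and]
    exact hrel x z
  -- (P S).eval at -1
  have hPneg : ∀ S : Finset A, (P S).eval (-1)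
      = if cyc S then (-1:ℚ)^N else 0 := by
    intro S
    rw [hP]
    rw [Polynomial.eval_finset_sum]
    have hterm : ∀ m ∈ Finset.range (Fintype.card V + 1),
        (Polynomial.C (((monSurj (reorientRel s t S) Finset.univ m).card : ℚ) / m.factorial) *
          descPochhammer ℚ m).eval (-1 : ℚ)
        = (-1:ℚ)^m * ((monSurj (reorientRel s t S) Finset.univ m).card : ℚ) := by
      intro m _
      rw [Polynomial.eval_mul, Polynomial.eval_C, descPochhammer_eval_neg_one]
      have hfac : ((m.factorial : ℚ)) ≠ 0 := by
        exact_mod_cast Nat.factorial_pos m |>.ne'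
      field_simp
    rw [Finset.sum_congr rfl hterm]
    rw [altSum_eq (reorientRel_trans s t S) (reorientRel_refl s t S) Finset.univ]
    by_cases hc : cyc S
    · rw [if_pos hc]
      have hsym : ∀ x z, reorientRel s t S x z → reorientRel s t S z x := (hsymiff S).2 hc
      rw [if_pos (fun x _ z _ h => hsym x z h), hclasses S hsym]
    · rw [if_neg hc, if_neg]
      intro hsym'
      exact hc ((hsymiff S).1
        (fun x z h => hsym' x (Finset.mem_univ x) z (Finset.mem_univ z) h))
  -- evaluate both sides of hLR at -1
  have hRneg : (∑ S : Finset A, Polynomial.C (y ^ S.card) * P S).eval (-1)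
      = (-1:ℚ)^N * ∑ S ∈ (Finset.univ : Finset (Finset A)).filter cyc, y ^ S.card := by
    rw [Polynomial.eval_finset_sum]
    have hterm : ∀ S : Finset A, (Polynomial.C (y ^ S.card) * P S).eval (-1)
        = if cyc S then (-1:ℚ)^N * y ^ S.card else 0 := by
      intro S
      rw [Polynomial.eval_mul, Polynomial.eval_C, hPneg S]
      by_cases hc : cyc S
      · rw [if_pos hc, if_pos hc]
        ring
      · rw [if_neg hc, if_neg hc, mul_zero]
    rw [Finset.sum_congr rfl (fun S _ => hterm S), ← Finset.sum_filter, Finset.mul_sum]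
  have hLneg : (Polynomial.C ((1+y)^(Fintype.card A)) * Q).eval (-1)
      = (1 + y) ^ (Fintype.card A) * MvPolynomial.eval ![(-1:ℚ), u, v] B := by
    rw [Polynomial.eval_mul, Polynomial.eval_C, hQeval]
  have hEq : (1 + y) ^ (Fintype.card A) * MvPolynomial.eval ![(-1:ℚ), u, v] B
      = (-1:ℚ)^N * ∑ S ∈ (Finset.univ : Finset (Finset A)).filter cyc, y ^ S.card := by
    rw [← hLneg, hLR, hRneg]
  have hww : (-1:ℚ)^N * (-1:ℚ)^N = 1 := by
    rw [← mul_pow]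
    norm_num
  rw [hEq, ← mul_assoc, hww, one_mul]
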